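/- (Lemma 1.3.) Let U ⊆ ℝᵐ be open, β and β₁ 2-form fields on U with β nondegenerate at every point, and let K : U → Matrix (Fin m) (Fin m) ℝ be a C^∞ matrix field with β₁(x)(u,v) = β(x)(K(x)u, v) for all x, u, v; set β₂(x)(u,v) = β(x)(K(x)²u, v), which is again a 2-form field. Then for all x ∈ U and u₁, u₂, u₃ ∈ ℝᵐ: β(x)(N_K(x)(u₁,u₂), u₃) + dβ(x)(K(x)u₁, K(x)u₂, u₃) = −dβ₂(x)(u₁,u₂,u₃) + dβ₁(x)(K(x)u₁, u₂, u₃) + dβ₁(x)(u₁, K(x)u₂, u₃). -/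

import Mathlib

open Matrix

/-- Directional derivative of a matrix field, entrywise. -/
noncomputable def matDirDeriv {d n : ℕ} (G : (Fin d → ℝ) → Matrix (Fin n) (Fin n) ℝ)
    (x w : Fin d → ℝ) : Matrix (Fin n) (Fin n) ℝ :=
  Matrix.of fun i j => fderiv ℝ (fun y => G y i j) x w

/-- The Nijenhuis torsion of a matrix field `G`. -/
noncomputable def nijenhuis {n : ℕ} (G : (Fin n → ℝ) → Matrix (Fin n) (Fin n) ℝ)
    (x u v : Fin n → ℝ) : Fin n → ℝ :=
  (matDirDeriv G x ((G x).mulVec u)).mulVec v - (matDirDeriv G x ((G x).mulVec v)).mulVec u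
    + (G x).mulVec ((matDirDeriv G x v).mulVec u) - (G x).mulVec ((matDirDeriv G x u).mulVec v)

/-- Exterior derivative of the 2-form field `(u,v) ↦ u ⬝ᵥ β(x)·v`:
`dβ(x)(u,v,w) = (Dβ(x)u)(v,w) − (Dβ(x)v)(u,w) + (Dβ(x)w)(u,v)`. -/
noncomputable def form2ExtDeriv {m : ℕ} (β : (Fin m → ℝ) → Matrix (Fin m) (Fin m) ℝ)
    (x u v w : Fin m → ℝ) : ℝ :=
  v ⬝ᵥ (matDirDeriv β x u).mulVec w - u ⬝ᵥ (matDirDeriv β x v).mulVec w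
    + u ⬝ᵥ (matDirDeriv β x w).mulVec v

/-- `(M *ᵥ u) ⬝ᵥ w = u ⬝ᵥ Mᵀ *ᵥ w`. -/
lemma dp_conv {m : ℕ} (M : Matrix (Fin m) (Fin m) ℝ) (u w : Fin m → ℝ) :
    (M *ᵥ u) ⬝ᵥ w = u ⬝ᵥ Mᵀ *ᵥ w := by
  rw [← Matrix.vecMul_transpose, ← Matrix.dotProduct_mulVec]

/-- Congruence for `matDirDeriv` of fields agreeing on a neighborhood. -/
lemma matDirDeriv_congr {d n : ℕ} {F G : (Fin d → ℝ) → Matrix (Fin n) (Fin n) ℝ}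
    {U : Set (Fin d → ℝ)} (hU : IsOpen U) {x : Fin d → ℝ} (hx : x ∈ U)
    (h : ∀ y ∈ U, F y = G y) (w : Fin d → ℝ) :
    matDirDeriv F x w = matDirDeriv G x w := by
  ext i j
  simp only [matDirDeriv, Matrix.of_apply]
  have heq : (fun y => F y i j) =ᶠ[nhds x] fun y => G y i j := by
    filter_upwards [hU.mem_nhds hx] with y hy
    rw [h y hy]
  rw [heq.fderiv_eq]

/-- Leibniz rule for `matDirDeriv` of a product of matrix fields. -/
lemma matDirDeriv_mul {d n : ℕ} {F G : (Fin d → ℝ) → Matrix (Fin n) (Fin n) ℝ}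
    {x : Fin d → ℝ}
    (hF : ∀ i j, DifferentiableAt ℝ (fun y => F y i j) x)
    (hG : ∀ i j, DifferentiableAt ℝ (fun y => G y i j) x) (w : Fin d → ℝ) :
    matDirDeriv (fun y => F y * G y) x w
      = matDirDeriv F x w * G x + F x * matDirDeriv G x w := by
  ext i j
  simp only [matDirDeriv, Matrix.of_apply, Matrix.add_apply, Matrix.mul_apply]
  rw [fderiv_fun_sum (fun k _ => ((hF i k).fun_mul (hG k j)))]
  simp only [ContinuousLinearMap.sum_apply]
  have h2 : ∀ k : Fin n, fderiv ℝ (fun y => F y i k * G y k j) x w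
      = F x i k * (fderiv ℝ (fun y => G y k j) x w)
        + (fderiv ℝ (fun y => F y i k) x w) * G x k j := by
    intro k
    rw [fderiv_fun_mul (hF i k) (hG k j)]
    simp [mul_comm]
  rw [Finset.sum_congr rfl (fun k _ => h2 k), Finset.sum_add_distrib]
  ring

lemma matDirDeriv_transpose {d n : ℕ} (F : (Fin d → ℝ) → Matrix (Fin n) (Fin n) ℝ)
    (x w : Fin d → ℝ) :
    matDirDeriv (fun y => (F y)ᵀ) x w = (matDirDeriv F x w)ᵀ := by
  ext i j
  simp [matDirDeriv]

/-- Lemma 1.3: if `β` is a nondegenerate 2-form field, `β₁` a 2-form field and `K` a matrix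
field with `β₁ = β(K·,·)`, and `β₂ = β(K²·,·)`, then
`β(N_K(u₁,u₂),u₃) + dβ(Ku₁,Ku₂,u₃) = −dβ₂(u₁,u₂,u₃) + dβ₁(Ku₁,u₂,u₃) + dβ₁(u₁,Ku₂,u₃)`. -/
theorem lemma_1_3 {m : ℕ} (U : Set (Fin m → ℝ)) (hU : IsOpen U)
    (β β₁ K : (Fin m → ℝ) → Matrix (Fin m) (Fin m) ℝ)
    (hβs : ∀ i j, ContDiffOn ℝ (⊤ : ℕ∞) (fun x => β x i j) U)
    (hβ₁s : ∀ i j, ContDiffOn ℝ (⊤ : ℕ∞) (fun x => β₁ x i j) U)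
    (hKs : ∀ i j, ContDiffOn ℝ (⊤ : ℕ∞) (fun x => K x i j) U)
    (hβalt : ∀ x ∈ U, (β x)ᵀ = -β x)
    (hβ₁alt : ∀ x ∈ U, (β₁ x)ᵀ = -β₁ x)
    (hβnd : ∀ x ∈ U, ∀ u : Fin m → ℝ, (∀ v, u ⬝ᵥ (β x).mulVec v = 0) → u = 0)
    (hrel : ∀ x ∈ U, ∀ u v : Fin m → ℝ,
      u ⬝ᵥ (β₁ x).mulVec v = ((K x).mulVec u) ⬝ᵥ (β x).mulVec v) :
    ∀ x ∈ U, ∀ u₁ u₂ u₃ : Fin m → ℝ,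
      (nijenhuis K x u₁ u₂) ⬝ᵥ (β x).mulVec u₃
          + form2ExtDeriv β x ((K x).mulVec u₁) ((K x).mulVec u₂) u₃
        = -form2ExtDeriv (fun y => (K y * K y)ᵀ * β y) x u₁ u₂ u₃
          + form2ExtDeriv β₁ x ((K x).mulVec u₁) u₂ u₃
          + form2ExtDeriv β₁ x u₁ ((K x).mulVec u₂) u₃ := by
  intro x hx u₁ u₂ u₃
  -- differentiability of entries at x
  have hKd : ∀ y ∈ U, ∀ i j, DifferentiableAt ℝ (fun z => K z i j) y := fun y hy i j =>
    (((hKs i j).contDiffAt (hU.mem_nhds hy)).differentiableAt (by simp))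
  have hβd : ∀ y ∈ U, ∀ i j, DifferentiableAt ℝ (fun z => β z i j) y := fun y hy i j =>
    (((hβs i j).contDiffAt (hU.mem_nhds hy)).differentiableAt (by simp))
  have hKTd : ∀ i j, DifferentiableAt ℝ (fun z => (K z)ᵀ i j) x := by
    intro i j; simpa [Matrix.transpose_apply] using hKd x hx j i
  have hKKd : ∀ i j, DifferentiableAt ℝ (fun z => ((K z * K z)ᵀ) i j) x := by
    intro i j
    have h1 : (fun z => ((K z * K z)ᵀ) i j) = fun z => ∑ k, K z j k * K z k i := by
      funext z; simp [Matrix.mul_apply]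
    rw [h1]
    exact DifferentiableAt.fun_sum fun k _ => (hKd x hx j k).mul (hKd x hx k i)
  -- β₁ equals Kᵀβ on U
  have hrelU : ∀ y ∈ U, β₁ y = (K y)ᵀ * β y := by
    intro y hy
    ext i j
    have h := hrel y hy (Pi.single i 1) (Pi.single j 1)
    simpa [dp_conv, Matrix.mulVec_mulVec, single_dotProduct, Matrix.mulVec_single,
      dotProduct, Pi.single_apply, Matrix.mul_apply, Matrix.col_apply, Matrix.transpose_apply] using h
  -- derivative of β₁
  have hD1 : ∀ w, matDirDeriv β₁ x w
      = (matDirDeriv K x w)ᵀ * β x + (K x)ᵀ * matDirDeriv β x w := by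
    intro w
    rw [matDirDeriv_congr hU hx hrelU w,
      matDirDeriv_mul hKTd (hβd x hx) w, matDirDeriv_transpose]
  -- derivative of β₂ = (K*K)ᵀ β
  have hKK : ∀ w, matDirDeriv (fun y => K y * K y) x w
      = matDirDeriv K x w * K x + K x * matDirDeriv K x w :=
    fun w => matDirDeriv_mul (hKd x hx) (hKd x hx) w
  have hD2 : ∀ w, matDirDeriv (fun y => (K y * K y)ᵀ * β y) x w
      = (matDirDeriv K x w * K x + K x * matDirDeriv K x w)ᵀ * β x
        + (K x * K x)ᵀ * matDirDeriv β x w := by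
    intro w
    rw [matDirDeriv_mul hKKd (hβd x hx) w]
    congr 1
    rw [show (fun y => (K y * K y)ᵀ) = fun y => ((fun z => K z * K z) y)ᵀ from rfl,
      matDirDeriv_transpose, hKK]
  -- the compatibility B K = Kᵀ B
  have h3 : β x * K x = (K x)ᵀ * β x := by
    have h := hβ₁alt x hx
    rw [hrelU x hx, Matrix.transpose_mul, Matrix.transpose_transpose, hβalt x hx,
      Matrix.neg_mul] at h
    exact neg_injective h
  simp only [nijenhuis, form2ExtDeriv, hD1, hD2, Matrix.mulVec_mulVec]
  simp only [Matrix.transpose_mul, Matrix.transpose_transpose, Matrix.transpose_add,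
    Matrix.add_mul, Matrix.mul_add, Matrix.add_mulVec, sub_dotProduct, add_dotProduct,
    dotProduct_add, dotProduct_sub, dp_conv, Matrix.mulVec_mulVec, Matrix.mul_assoc]
  rw [h3]
  ring
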